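/- In the sup-norm metric on ℝ², if f(x,y) = (2x, y/2) and a point (x̄, ȳ) satisfies max(2ⁿ|x̄ − x₀|, 2^{−n}|ȳ|) < 2^{−2ⁿ x₀} for all n > 0, where x₀ > 0, then (x̄, ȳ) = (x₀, 0). -/

import Mathlib

lemma sq_le_two_pow_of_four_le : ∀ n : ℕ, 4 ≤ n → n ^ 2 ≤ 2 ^ n := by
  intro n hn
  induction n with
  | zero => omega
  | succ m ih =>
    rcases Nat.lt_or_ge m 4 with hm | hm
    · interval_cases m <;> simp_all
    · have h1 := ih (by omega)
      have h2 : (m + 1) ^ 2 ≤ 2 * m ^ 2 := by nlinarith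
      calc (m + 1) ^ 2 ≤ 2 * m ^ 2 := h2
        _ ≤ 2 * 2 ^ m := by omega
        _ = 2 ^ (m + 1) := by ring

/-- Key uniqueness step for `f(x,y) = (2x, y/2)` with tolerance `ε(p) = 2^{-‖p‖}`:
if `max(2ⁿ|x̄ − x₀|, 2^{-n}|ȳ|) < 2^{-2ⁿx₀}` for all `n > 0` and `x₀ > 0`,
then `(x̄, ȳ) = (x₀, 0)`. -/
theorem shadowing_orbit_unique (x₀ xb yb : ℝ) (hx₀ : 0 < x₀)
    (h : ∀ n : ℕ, 0 < n →
      max ((2 : ℝ) ^ n * |xb - x₀|) ((2 : ℝ) ^ (-(n : ℤ)) * |yb|) <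
        (2 : ℝ) ^ (-((2 : ℝ) ^ n * x₀))) :
    xb = x₀ ∧ yb = 0 := by
  set r : ℝ := (2 : ℝ) ^ (-x₀) with hr_def
  have hr0 : 0 < r := Real.rpow_pos_of_pos two_pos _
  have hr1 : r < 1 := Real.rpow_lt_one_of_one_lt_of_neg one_lt_two (neg_neg_iff_pos.mpr hx₀)
  -- rewrite r^n
  have hrpow : ∀ n : ℕ, r ^ n = (2 : ℝ) ^ (-((n : ℝ) * x₀)) := by
    intro n
    rw [hr_def, ← Real.rpow_natCast ((2:ℝ)^(-x₀)) n, ← Real.rpow_mul (by norm_num)]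
    ring_nf
  -- the target of the rpow is monotone in the exponent
  have hmono : ∀ a b : ℝ, a ≤ b → (2 : ℝ) ^ a ≤ (2 : ℝ) ^ b := fun a b hab =>
    Real.rpow_le_rpow_left_iff (x := (2:ℝ)) one_lt_two |>.mpr hab
  have hnle : ∀ n : ℕ, (n : ℝ) ≤ (2 : ℝ) ^ n := by
    intro n
    calc (n : ℝ) ≤ ((2 ^ n : ℕ) : ℝ) := by exact_mod_cast (Nat.lt_two_pow_self (n := n)).le
      _ = (2 : ℝ) ^ n := by push_cast; ring
  -- Part 1 : xb = x₀
  have hA : ∀ n : ℕ, 0 < n → |xb - x₀| < r ^ n := by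
    intro n hn
    have hmax := (h n hn)
    have h1 : (2 : ℝ) ^ n * |xb - x₀| < (2 : ℝ) ^ (-((2 : ℝ) ^ n * x₀)) :=
      lt_of_le_of_lt (le_max_left _ _) hmax
    have h2 : |xb - x₀| ≤ (2 : ℝ) ^ n * |xb - x₀| := by
      nlinarith [abs_nonneg (xb - x₀), one_le_pow₀ (a := (2:ℝ)) (n := n) one_le_two]
    have h3 : (2 : ℝ) ^ (-((2 : ℝ) ^ n * x₀)) ≤ (2 : ℝ) ^ (-((n : ℝ) * x₀)) := by
      apply hmono
      have := hnle n
      nlinarith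
    rw [hrpow]
    exact lt_of_lt_of_le (h2.trans_lt h1) h3
  have hxb : xb = x₀ := by
    by_contra hne
    have habs : 0 < |xb - x₀| := abs_pos.mpr (sub_ne_zero.mpr hne)
    obtain ⟨n, hnlt⟩ := exists_pow_lt_of_lt_one habs hr1
    have := hA (n + 1) (Nat.succ_pos n)
    have hstep : r ^ (n + 1) ≤ r ^ n := pow_le_pow_of_le_one hr0.le hr1.le (Nat.le_succ n)
    linarith
  refine ⟨hxb, ?_⟩
  -- Part 2 : yb = 0
  have hB : ∀ n : ℕ, 4 ≤ n → 2 ≤ (n : ℝ) * x₀ → |yb| < 2 * r ^ n := by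
    intro n hn4 hnx
    have hn : 0 < n := by omega
    have hmax := h n hn
    have h1 : (2 : ℝ) ^ (-(n : ℤ)) * |yb| < (2 : ℝ) ^ (-((2 : ℝ) ^ n * x₀)) :=
      lt_of_le_of_lt (le_max_right _ _) hmax
    have hp : (0:ℝ) < (2:ℝ) ^ n := by positivity
    have h2 : |yb| < (2 : ℝ) ^ n * (2 : ℝ) ^ (-((2 : ℝ) ^ n * x₀)) := by
      rw [zpow_neg, zpow_natCast] at h1
      calc |yb| = (2:ℝ)^n * (((2:ℝ)^n)⁻¹ * |yb|) := by field_simp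
        _ < (2:ℝ)^n * (2 : ℝ) ^ (-((2 : ℝ) ^ n * x₀)) := by
            exact (mul_lt_mul_iff_right₀ hp).mpr h1
    -- rewrite product as a single rpow
    have h3 : (2 : ℝ) ^ n * (2 : ℝ) ^ (-((2 : ℝ) ^ n * x₀)) =
        (2 : ℝ) ^ ((n : ℝ) - (2 : ℝ) ^ n * x₀) := by
      rw [sub_eq_add_neg, Real.rpow_add two_pos, Real.rpow_natCast]
    -- exponent bound
    have hsq : (n : ℝ) ^ 2 ≤ (2 : ℝ) ^ n := by
      have := sq_le_two_pow_of_four_le n hn4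
      calc ((n : ℝ)) ^ 2 = ((n ^ 2 : ℕ) : ℝ) := by push_cast; ring
        _ ≤ ((2 ^ n : ℕ) : ℝ) := by exact_mod_cast this
        _ = (2 : ℝ) ^ n := by push_cast; ring
    have hexp : (n : ℝ) - (2 : ℝ) ^ n * x₀ ≤ 1 - (n : ℝ) * x₀ := by
      have hnn : (1:ℝ) ≤ (n : ℝ) := by exact_mod_cast Nat.one_le_iff_ne_zero.mpr (by omega)
      nlinarith
    have h4 : (2 : ℝ) ^ ((n : ℝ) - (2 : ℝ) ^ n * x₀) ≤ (2 : ℝ) ^ ((1:ℝ) - (n : ℝ) * x₀) :=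
      hmono _ _ hexp
    have h5 : (2 : ℝ) ^ ((1:ℝ) - (n : ℝ) * x₀) = 2 * r ^ n := by
      rw [hrpow, sub_eq_add_neg, Real.rpow_add two_pos, Real.rpow_one]
    calc |yb| < _ := h2
      _ = _ := h3
      _ ≤ _ := h4
      _ = 2 * r ^ n := h5
  by_contra hyne
  have habs : 0 < |yb| := abs_pos.mpr hyne
  obtain ⟨n₀, hn₀⟩ := exists_pow_lt_of_lt_one (half_pos habs) hr1
  obtain ⟨N, hN⟩ := exists_nat_ge (2 / x₀)
  set n := max n₀ (max 4 N) with hn_def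
  have hn4 : 4 ≤ n := le_trans (le_max_left 4 N) (le_max_right _ _)
  have hNn : (N : ℝ) ≤ (n : ℝ) := by
    exact_mod_cast le_trans (le_max_right 4 N) (le_max_right n₀ _)
  have hnx : 2 ≤ (n : ℝ) * x₀ := by
    have h2N : 2 ≤ (N : ℝ) * x₀ := by
      rw [div_le_iff₀ hx₀] at hN; linarith
    nlinarith
  have hlt := hB n hn4 hnx
  have hdec : r ^ n ≤ r ^ n₀ := pow_le_pow_of_le_one hr0.le hr1.le (le_max_left _ _)
  linarith
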